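/- Let D_1,…,D_k be an (n,k,c,λ)-EDF in an abelian group G of order n, giving the authentication code with encoding e_g(i) = D_i + g for g ∈ G. For any key g and any key g' ≠ g, the number of messages m such that m ∈ D_i + g and m ∈ D_j + g' for some i ≠ j is exactly λ. -/
import Mathlib


open Finset

/-- The number of ways a group element `g` is realized as an "external difference"
`x - y` with `x ∈ D i`, `y ∈ D j` and `i ≠ j`. -/
def extDiffCount {G : Type*} [AddCommGroup G] [Fintype G] [DecidableEq G] {k : ℕ}
    (D : Fin k → Finset G) (g : G) : ℕ :=
  (univ.filter fun q : (Fin k × Fin k) × G × G =>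
    q.1.1 ≠ q.1.2 ∧ q.2.1 ∈ D q.1.1 ∧ q.2.2 ∈ D q.1.2 ∧ q.2.1 - q.2.2 = g).card

theorem stmt_6 {G : Type*} [AddCommGroup G] [Fintype G] [DecidableEq G]
    (n k c lam : ℕ) (hn : Fintype.card G = n)
    (D : Fin k → Finset G) (hc : ∀ i, (D i).card = c)
    (hdisj : ∀ i j : Fin k, i ≠ j → Disjoint (D i) (D j))
    (hEDF : ∀ g : G, g ≠ 0 → extDiffCount D g = lam)
    (g g' : G) (hgg : g ≠ g') :
    (univ.filter fun m : G =>
      ∃ i j : Fin k, i ≠ j ∧ m - g ∈ D i ∧ m - g' ∈ D j).card = lam := by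
  have hne : g' - g ≠ 0 := sub_ne_zero.mpr (Ne.symm hgg)
  rw [← hEDF (g' - g) hne]
  unfold extDiffCount
  have key : ∀ (x : G) (i i' : Fin k), x ∈ D i → x ∈ D i' → i = i' := by
    intro x i i' hi hi'
    by_contra h
    exact (Finset.disjoint_left.mp (hdisj i i' h)) hi hi'
  symm
  apply Finset.card_bij (fun q _ => q.2.1 + g)
  · rintro ⟨⟨i, j⟩, x, y⟩ hq
    simp only [mem_filter, mem_univ, true_and] at hq ⊢
    obtain ⟨hij, hx, hy, hd⟩ := hq
    refine ⟨i, j, hij, by simpa using hx, ?_⟩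
    have h2 : y = x - (g' - g) := by rw [← hd]; abel
    have h1 : x + g - g' = y := by rw [h2]; abel
    rw [h1]; exact hy
  · rintro ⟨⟨i, j⟩, x, y⟩ hq ⟨⟨i', j'⟩, x', y'⟩ hq' h
    simp only [mem_filter, mem_univ, true_and] at hq hq'
    obtain ⟨hij, hx, hy, hd⟩ := hq
    obtain ⟨hij', hx', hy', hd'⟩ := hq'
    have hxx : x = x' := by simpa using h
    subst hxx
    have hyy : y = y' := sub_right_injective (hd.trans hd'.symm)
    subst hyy
    have : i = i' := key x i i' hx hx'
    have : j = j' := key y j j' hy hy'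
    simp_all
  · intro m hm
    simp only [mem_filter, mem_univ, true_and] at hm
    obtain ⟨i, j, hij, hi, hj⟩ := hm
    refine ⟨⟨⟨i, j⟩, m - g, m - g'⟩, ?_, by simp⟩
    simp only [mem_filter, mem_univ, true_and]
    exact ⟨hij, hi, hj, by abel⟩
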